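/- arXiv:2602.02419 — 5 statements merged into one kernel-verified Lean document; each statement's English description precedes it below -/
import Mathlib

section
/- Let n ≥ 1 be a natural number, p ∈ [0,1], and let X be a random variable with the binomial distribution Bin(n,p). Fix δ ∈ (0,1). Define the Clopper–Pearson upper bound p_U(k) = sup{R ∈ [0,1] : F_{n,R}(k) ≥ δ/2} and the Clopper–Pearson lower bound p_L(k) = inf{R ∈ [0,1] : 1 − F_{n,R}(k−1) ≥ δ/2} (with p_L(0) = 0 and p_U(k) = 1 for k ≥ n). Then Pr(p_L(X) ≤ p ≤ p_U(X)) ≥ 1 − δ; that is, the Clopper–Pearson interval [p_L(X), p_U(X)] covers the true success probability p with probability at least 1 − δ. -/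
open scoped Classical BigOperators

/-- The probability mass function of the binomial distribution `Bin(n, p)` at `j`. -/
noncomputable def binomPMF (n : ℕ) (p : ℝ) (j : ℕ) : ℝ :=
  (n.choose j : ℝ) * p ^ j * (1 - p) ^ (n - j)

/-- The cumulative distribution function of `Bin(n, p)` at `k`:
`F_{n,p}(k) = Σ_{j=0}^{min(k,n)} C(n,j) p^j (1-p)^{n-j}`. -/
noncomputable def binomCDF (n : ℕ) (p : ℝ) (k : ℕ) : ℝ :=
  ∑ j ∈ Finset.range (min k n + 1), binomPMF n p j

/-- One-sided Clopper–Pearson upper confidence bound at count `k` and level `δ`: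
`sup {R ∈ [0,1] : F_{n,R}(k) ≥ δ}`. -/
noncomputable def cpUpper (n : ℕ) (δ : ℝ) (k : ℕ) : ℝ :=
  sSup {R : ℝ | R ∈ Set.Icc (0 : ℝ) 1 ∧ δ ≤ binomCDF n R k}

/-- One-sided Clopper–Pearson lower confidence bound at count `k` and level `δ`:
`inf {R ∈ [0,1] : 1 - F_{n,R}(k-1) ≥ δ}` for `k ≥ 1`, and `0` for `k = 0`. -/
noncomputable def cpLower (n : ℕ) (δ : ℝ) : ℕ → ℝ
  | 0 => 0
  | k + 1 => sInf {R : ℝ | R ∈ Set.Icc (0 : ℝ) 1 ∧ δ ≤ 1 - binomCDF n R k}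

lemma binomPMF_nonneg (n : ℕ) {p : ℝ} (hp0 : 0 ≤ p) (hp1 : p ≤ 1) (j : ℕ) :
    0 ≤ binomPMF n p j := by
  unfold binomPMF
  have h2 : (0:ℝ) ≤ 1 - p := by linarith
  positivity

lemma binomPMF_sum (n : ℕ) (p : ℝ) :
    ∑ j ∈ Finset.range (n+1), binomPMF n p j = 1 := by
  have h := add_pow p (1-p) n
  have h2 : p + (1-p) = 1 := by ring
  rw [h2, one_pow] at h
  unfold binomPMF
  conv_rhs => rw [h]
  exact Finset.sum_congr rfl fun j _ => by ring

lemma le_cpUpper (n : ℕ) (δ : ℝ) (k : ℕ) {p : ℝ} (hp0 : 0 ≤ p) (hp1 : p ≤ 1)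
    (h : δ ≤ binomCDF n p k) : p ≤ cpUpper n δ k :=
  le_csSup ⟨1, fun _ hx => hx.1.2⟩ ⟨⟨hp0, hp1⟩, h⟩

lemma cpLower_le (n : ℕ) (δ : ℝ) (m : ℕ) {p : ℝ} (hp0 : 0 ≤ p) (hp1 : p ≤ 1)
    (h : δ ≤ 1 - binomCDF n p m) : cpLower n δ (m+1) ≤ p :=
  csInf_le ⟨0, fun _ hx => hx.1.1⟩ ⟨⟨hp0, hp1⟩, h⟩

/-- Clopper–Pearson two-sided coverage: the interval [p_L(X), p_U(X)] (with one-sided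
bounds at level δ/2) covers the true success probability with probability at least 1 - δ. -/
theorem clopperPearson_two_sided_coverage
    (n : ℕ) (hn : 1 ≤ n) (p : ℝ) (hp : p ∈ Set.Icc (0 : ℝ) 1)
    (δ : ℝ) (hδ : δ ∈ Set.Ioo (0 : ℝ) 1) :
    1 - δ ≤ ∑ j ∈ Finset.range (n + 1),
      (if cpLower n (δ / 2) j ≤ p ∧ p ≤ cpUpper n (δ / 2) j then binomPMF n p j else 0) := by
  obtain ⟨hp0, hp1⟩ := hp
  obtain ⟨hδ0, hδ1⟩ := hδ
  have hpmf : ∀ j, 0 ≤ binomPMF n p j := binomPMF_nonneg n hp0 hp1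
  set δ' := δ / 2 with hδ'def
  have hδ'pos : 0 < δ' := by positivity
  set S := Finset.range (n+1) with hSdef
  set A := S.filter (fun k => ¬ p ≤ cpUpper n δ' k) with hAdef
  set B := S.filter (fun k => ¬ cpLower n δ' k ≤ p) with hBdef
  -- sum over A ≤ δ'
  have hAsum : ∑ k ∈ A, binomPMF n p k ≤ δ' := by
    rcases A.eq_empty_or_nonempty with hA | hA
    · rw [hA]; simp [le_of_lt hδ'pos]
    · set a := A.max' hA with ha
      have haA : a ∈ A := A.max'_mem hA
      have han : a ≤ n := by
        have := (Finset.mem_filter.mp haA).1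
        simpa [hSdef, Nat.lt_succ_iff] using this
      have hcdf : binomCDF n p a < δ' := by
        by_contra hcon
        push_neg at hcon
        exact (Finset.mem_filter.mp haA).2 (le_cpUpper n δ' a hp0 hp1 hcon)
      calc ∑ k ∈ A, binomPMF n p k
          ≤ ∑ k ∈ Finset.range (a+1), binomPMF n p k := by
            apply Finset.sum_le_sum_of_subset_of_nonneg
            · intro k hk
              exact Finset.mem_range.mpr (Nat.lt_succ_of_le (A.le_max' k hk))
            · intro k _ _; exact hpmf k
        _ = binomCDF n p a := by rw [binomCDF, min_eq_left han]
        _ ≤ δ' := le_of_lt hcdf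
  -- sum over B ≤ δ'
  have hBsum : ∑ k ∈ B, binomPMF n p k ≤ δ' := by
    rcases B.eq_empty_or_nonempty with hB | hB
    · rw [hB]; simp [le_of_lt hδ'pos]
    · set b := B.min' hB with hb
      have hbB : b ∈ B := B.min'_mem hB
      have hbn : b ≤ n := by
        have := (Finset.mem_filter.mp hbB).1
        simpa [hSdef, Nat.lt_succ_iff] using this
      have hb0 : b ≠ 0 := by
        intro h0
        have h2 := (Finset.mem_filter.mp hbB).2
        rw [h0] at h2
        exact h2 (by simp [cpLower, hp0])
      obtain ⟨m, hm⟩ := Nat.exists_eq_succ_of_ne_zero hb0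
      have hmn : m ≤ n := by omega
      have htail : 1 - binomCDF n p m < δ' := by
        by_contra hcon
        push_neg at hcon
        have h2 := (Finset.mem_filter.mp hbB).2
        rw [hm] at h2
        exact h2 (cpLower_le n δ' m hp0 hp1 hcon)
      have hsplit : ∑ k ∈ Finset.range b, binomPMF n p k
          + ∑ k ∈ Finset.Ico b (n+1), binomPMF n p k = 1 := by
        rw [Finset.range_eq_Ico, Finset.sum_Ico_consecutive _ (Nat.zero_le b) (by omega),
          ← Finset.range_eq_Ico, binomPMF_sum]
      have hcdfm : ∑ k ∈ Finset.range b, binomPMF n p k = binomCDF n p m := by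
        rw [binomCDF, min_eq_left hmn, hm]
      calc ∑ k ∈ B, binomPMF n p k
          ≤ ∑ k ∈ Finset.Ico b (n+1), binomPMF n p k := by
            apply Finset.sum_le_sum_of_subset_of_nonneg
            · intro k hk
              refine Finset.mem_Ico.mpr ⟨B.min'_le k hk, ?_⟩
              have := (Finset.mem_filter.mp hk).1
              simpa [hSdef] using this
            · intro k _ _; exact hpmf k
        _ = 1 - binomCDF n p m := by rw [← hcdfm]; linarith
        _ ≤ δ' := le_of_lt htail
  -- combine
  have hsplit2 : ∀ j : ℕ,
      (if cpLower n δ' j ≤ p ∧ p ≤ cpUpper n δ' j then binomPMF n p j else 0)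
      = binomPMF n p j
        - (if ¬ (cpLower n δ' j ≤ p ∧ p ≤ cpUpper n δ' j) then binomPMF n p j else 0) := by
    intro j; by_cases h : cpLower n δ' j ≤ p ∧ p ≤ cpUpper n δ' j <;> simp [h]
  have hfail : ∑ j ∈ S, (if ¬ (cpLower n δ' j ≤ p ∧ p ≤ cpUpper n δ' j)
      then binomPMF n p j else 0) ≤ δ := by
    rw [← Finset.sum_filter]
    have hsub : S.filter (fun j => ¬ (cpLower n δ' j ≤ p ∧ p ≤ cpUpper n δ' j)) ⊆ A ∪ B := by
      intro k hk
      obtain ⟨hkS, hkc⟩ := Finset.mem_filter.mp hk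
      rw [not_and_or] at hkc
      rcases hkc with h | h
      · exact Finset.mem_union_right _ (Finset.mem_filter.mpr ⟨hkS, h⟩)
      · exact Finset.mem_union_left _ (Finset.mem_filter.mpr ⟨hkS, h⟩)
    calc ∑ j ∈ S.filter (fun j => ¬ (cpLower n δ' j ≤ p ∧ p ≤ cpUpper n δ' j)), binomPMF n p j
        ≤ ∑ j ∈ A ∪ B, binomPMF n p j :=
          Finset.sum_le_sum_of_subset_of_nonneg hsub (fun k _ _ => hpmf k)
      _ ≤ ∑ j ∈ A, binomPMF n p j + ∑ j ∈ B, binomPMF n p j := by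
          have h1 : ∑ j ∈ A ∪ B, binomPMF n p j + ∑ j ∈ A ∩ B, binomPMF n p j
              = ∑ j ∈ A, binomPMF n p j + ∑ j ∈ B, binomPMF n p j :=
            Finset.sum_union_inter
          have h2 : 0 ≤ ∑ j ∈ A ∩ B, binomPMF n p j :=
            Finset.sum_nonneg fun k _ => hpmf k
          linarith
      _ ≤ δ' + δ' := add_le_add hAsum hBsum
      _ = δ := by rw [hδ'def]; ring
  calc (1:ℝ) - δ
      ≤ ∑ j ∈ S, binomPMF n p j
        - ∑ j ∈ S, (if ¬ (cpLower n δ' j ≤ p ∧ p ≤ cpUpper n δ' j)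
            then binomPMF n p j else 0) := by
        rw [binomPMF_sum]; linarith
    _ = ∑ j ∈ S, (if cpLower n δ' j ≤ p ∧ p ≤ cpUpper n δ' j
            then binomPMF n p j else 0) := by
        rw [← Finset.sum_sub_distrib]
        exact (Finset.sum_congr rfl fun j _ => (hsplit2 j).symm)
end

section
/- Let n ≥ 1 be a natural number and let k be a natural number with 0 ≤ k < n. Then the function p ↦ F_{n,p}(k) is strictly decreasing on the interval [0,1], with F_{n,0}(k) = 1 and F_{n,1}(k) = 0. -/
open scoped Classical BigOperators

lemma binomPMF_hasDerivAt (n j : ℕ) (p : ℝ) :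
    HasDerivAt (fun p : ℝ => binomPMF n p j)
      ((j : ℝ) * (n.choose j : ℝ) * p ^ (j - 1) * (1 - p) ^ (n - j)
        - ((j + 1 : ℕ) : ℝ) * (n.choose (j+1) : ℝ) * p ^ j * (1 - p) ^ (n - (j+1))) p := by
  have h1 : HasDerivAt (fun p : ℝ => p ^ j) ((j:ℝ) * p ^ (j-1)) p := hasDerivAt_pow j p
  have h2 := (hasDerivAt_pow (n - j) (1 - p)).comp p
    ((hasDerivAt_const p (1:ℝ)).sub (hasDerivAt_id p))
  have h3 := (h1.mul h2).const_mul ((n.choose j : ℝ))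
  convert h3 using 1
  · rfl
  · rfl
  · ext q; simp only [binomPMF, Function.comp, id, Pi.mul_apply]; ring
  · have hcast : (n.choose (j+1) : ℝ) * ((j : ℝ)+1) = (n.choose j : ℝ) * ((n - j : ℕ) : ℝ) := by
      exact_mod_cast congrArg (Nat.cast (R := ℝ)) (Nat.choose_succ_right_eq n j)
    have he1 : n - (j+1) = n - j - 1 := by omega
    simp only [Function.comp_apply]
    push_cast
    rw [he1]
    linear_combination (-(p ^ j * (1 - p) ^ (n - j - 1))) * hcast

/-- For 0 ≤ k < n, the map p ↦ F_{n,p}(k) is strictly decreasing on [0,1],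
with value 1 at p = 0 and value 0 at p = 1. -/
theorem binomCDF_strictAntiOn
    (n k : ℕ) (hn : 1 ≤ n) (hk : k < n) :
    StrictAntiOn (fun p : ℝ => binomCDF n p k) (Set.Icc (0 : ℝ) 1) ∧
    binomCDF n 0 k = 1 ∧ binomCDF n 1 k = 0 := by
  have hkn : k ≤ n := hk.le
  have hmin : min k n = k := min_eq_left hkn
  have hfun : (fun p : ℝ => binomCDF n p k)
      = fun p : ℝ => ∑ j ∈ Finset.range (k + 1), binomPMF n p j := by
    funext p; simp [binomCDF, hmin]
  have hderiv : ∀ p : ℝ, HasDerivAt (fun p : ℝ => binomCDF n p k)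
      (-(((k + 1 : ℕ) : ℝ) * (n.choose (k+1) : ℝ) * p ^ k * (1 - p) ^ (n - (k+1)))) p := by
    intro p
    rw [hfun]
    have h := HasDerivAt.fun_sum (fun j _ => binomPMF_hasDerivAt n j p)
      (u := Finset.range (k + 1))
    have hsum : ∑ j ∈ Finset.range (k + 1),
        ((j : ℝ) * (n.choose j : ℝ) * p ^ (j - 1) * (1 - p) ^ (n - j)
          - ((j + 1 : ℕ) : ℝ) * (n.choose (j+1) : ℝ) * p ^ j * (1 - p) ^ (n - (j+1)))
        = -(((k + 1 : ℕ) : ℝ) * (n.choose (k+1) : ℝ) * p ^ k * (1 - p) ^ (n - (k+1))) := by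
      have := Finset.sum_range_sub'
        (f := fun j => (j : ℝ) * (n.choose j : ℝ) * p ^ (j - 1) * (1 - p) ^ (n - j)) (k + 1)
      have heq : ∀ j, ((j + 1 : ℕ) : ℝ) * (n.choose (j+1) : ℝ) * p ^ j * (1 - p) ^ (n - (j+1))
          = ((j+1 : ℕ) : ℝ) * (n.choose (j+1) : ℝ) * p ^ ((j+1) - 1) * (1 - p) ^ (n - (j+1)) := by
        intro j; simp
      simp only [heq]
      rw [this]
      simp
    rw [hsum] at h
    exact h
  have hcont : ContinuousOn (fun p : ℝ => binomCDF n p k) (Set.Icc (0:ℝ) 1) :=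
    fun p _ => ((hderiv p).differentiableAt.continuousAt).continuousWithinAt
  refine ⟨?_, ?_, ?_⟩
  · apply StrictAntiOn.mono (s := Set.Icc (0:ℝ) 1) ?_ le_rfl
    apply strictAntiOn_of_deriv_neg (convex_Icc 0 1) hcont
    intro p hp
    rw [interior_Icc] at hp
    rw [(hderiv p).deriv]
    have hp0 : 0 < p := hp.1
    have hp1 : 0 < 1 - p := by linarith [hp.2]
    have hch : 0 < (n.choose (k+1) : ℝ) := by
      exact_mod_cast Nat.choose_pos (by omega : k + 1 ≤ n)
    have : 0 < ((k + 1 : ℕ) : ℝ) * (n.choose (k+1) : ℝ) * p ^ k * (1 - p) ^ (n - (k+1)) := by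
      positivity
    linarith
  · rw [congrFun hfun (0:ℝ)]
    rw [Finset.sum_eq_single 0]
    · simp [binomPMF]
    · intro j _ hj
      simp [binomPMF, zero_pow hj]
    · simp
  · rw [congrFun hfun (1:ℝ)]
    apply Finset.sum_eq_zero
    intro j hj
    have : 0 < n - j := by
      have := Finset.mem_range.mp hj; omega
    simp [binomPMF, zero_pow (by omega : n - j ≠ 0)]
end

section
/- Let n ≥ 1 be a natural number, let k be a natural number with 0 ≤ k < n, and let δ ∈ (0,1). Then the Clopper–Pearson upper bound p* = p_U^δ(k) = sup{R ∈ [0,1] : F_{n,R}(k) ≥ δ} satisfies p* ∈ (0,1) and attains the nominal level exactly: F_{n,p*}(k) = δ. -/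
open scoped Classical BigOperators

/-- For 0 ≤ k < n, the Clopper–Pearson upper bound p* lies in (0,1) and attains the
nominal level exactly: F_{n,p*}(k) = δ. -/
theorem cpUpper_attains_level
    (n k : ℕ) (hn : 1 ≤ n) (hk : k < n) (δ : ℝ) (hδ : δ ∈ Set.Ioo (0 : ℝ) 1) :
    cpUpper n δ k ∈ Set.Ioo (0 : ℝ) 1 ∧ binomCDF n (cpUpper n δ k) k = δ := by
  obtain ⟨hδ0, hδ1⟩ := hδ
  set S := {R : ℝ | R ∈ Set.Icc (0 : ℝ) 1 ∧ δ ≤ binomCDF n R k} with hSdef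
  have cont : Continuous fun p : ℝ => binomCDF n p k := by
    unfold binomCDF binomPMF
    exact continuous_finset_sum _ fun j _ => by fun_prop
  have hF0 : binomCDF n 0 k = 1 := by
    unfold binomCDF
    rw [Finset.sum_eq_single 0]
    · simp [binomPMF]
    · intro j _ hj0
      simp [binomPMF, zero_pow hj0]
    · simp
  have hF1 : binomCDF n 1 k = 0 := by
    unfold binomCDF
    apply Finset.sum_eq_zero
    intro j hj
    have hjn : j < n := by
      have := Finset.mem_range.mp hj
      omega
    simp [binomPMF, sub_self, zero_pow (Nat.sub_ne_zero_of_lt hjn)]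
  have hbdd : BddAbove S := ⟨1, fun x hx => hx.1.2⟩
  have h0S : (0 : ℝ) ∈ S := ⟨⟨le_refl 0, zero_le_one⟩, by rw [hF0]; exact hδ1.le⟩
  have hne : S.Nonempty := ⟨0, h0S⟩
  have hclosed : IsClosed S := by
    have hS : S = Set.Icc 0 1 ∩ {R | δ ≤ binomCDF n R k} := rfl
    rw [hS]
    exact isClosed_Icc.inter (isClosed_le continuous_const cont)
  have hmem : sSup S ∈ S := hclosed.csSup_mem hne hbdd
  have hcp : cpUpper n δ k = sSup S := rfl
  set p := sSup S with hp
  have hp0 : 0 ≤ p := hmem.1.1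
  have hp1 : p ≤ 1 := hmem.1.2
  have hple : δ ≤ binomCDF n p k := hmem.2
  have hplt1 : p < 1 := by
    rcases lt_or_eq_of_le hp1 with h | h
    · exact h
    · rw [h, hF1] at hple; linarith
  have hpos : 0 < p := by
    have h1 : (fun _ : ℝ => δ) 0 < (fun x => binomCDF n x k) 0 := by
      simpa [hF0] using hδ1
    have hev : ∀ᶠ x in nhds (0 : ℝ), δ < binomCDF n x k :=
      ContinuousAt.eventually_lt continuousAt_const cont.continuousAt h1
    obtain ⟨ε, hε, hball⟩ := Metric.eventually_nhds_iff.mp hev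
    have hx0 : min (ε / 2) 1 ∈ S := by
      refine ⟨⟨le_min (by linarith) zero_le_one, min_le_right _ _⟩, ?_⟩
      have : dist (min (ε / 2) 1) 0 < ε := by
        rw [Real.dist_eq, sub_zero, abs_of_nonneg (le_min (by linarith) zero_le_one)]
        exact lt_of_le_of_lt (min_le_left _ _) (by linarith)
      exact (hball this).le
    calc (0 : ℝ) < min (ε / 2) 1 := lt_min (by linarith) one_pos
      _ ≤ p := le_csSup hbdd hx0
  have hge : binomCDF n p k ≤ δ := by
    by_contra h
    push_neg at h
    have hev : ∀ᶠ x in nhds p, δ < binomCDF n x k ∧ x < 1 :=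
      (ContinuousAt.eventually_lt continuousAt_const cont.continuousAt h).and
        (eventually_lt_nhds hplt1)
    have hev' : ∀ᶠ x in nhdsWithin p (Set.Ioi p),
        (δ < binomCDF n x k ∧ x < 1) ∧ x ∈ Set.Ioi p :=
      (hev.filter_mono nhdsWithin_le_nhds).and self_mem_nhdsWithin
    obtain ⟨q, ⟨hq1, hq2⟩, hq3⟩ := hev'.exists
    have hqS : q ∈ S := ⟨⟨le_trans hp0 (le_of_lt hq3), hq2.le⟩, hq1.le⟩
    exact absurd (le_csSup hbdd hqS) (not_le.mpr hq3)
  exact ⟨⟨hpos, hplt1⟩, le_antisymm hge hple⟩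
end

section
/- Let n ≥ 1 be a natural number, let R ∈ [0,1] be the true false discovery rate, let α ∈ (0,1) be a user-specified risk level with R > α, let δ ∈ (0,1), and let X be a random variable with the binomial distribution Bin(n,R) counting the number of incorrect predictions among n accepted samples. Then Pr(p_U^δ(X) ≤ α) ≤ δ; that is, the probability of falsely certifying that the risk level α is satisfied, when the true error rate R exceeds α, is at most δ. -/
open scoped Classical BigOperators

/-- If the true error rate R exceeds the user-specified risk level α, then the probability
of falsely certifying that the risk level is satisfied (i.e. p_U^δ(X) ≤ α) is at most δ. -/
theorem prob_false_certification_le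
    (n : ℕ) (hn : 1 ≤ n) (R : ℝ) (hR : R ∈ Set.Icc (0 : ℝ) 1)
    (α : ℝ) (hα : α ∈ Set.Ioo (0 : ℝ) 1) (hRα : α < R)
    (δ : ℝ) (hδ : δ ∈ Set.Ioo (0 : ℝ) 1) :
    ∑ j ∈ Finset.range (n + 1),
      (if cpUpper n δ j ≤ α then binomPMF n R j else 0) ≤ δ := by
  obtain ⟨hR0, hR1⟩ := hR
  classical
  set S := (Finset.range (n+1)).filter (fun j => cpUpper n δ j ≤ α) with hS
  have hsum : ∑ j ∈ Finset.range (n+1), (if cpUpper n δ j ≤ α then binomPMF n R j else 0)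
      = ∑ j ∈ S, binomPMF n R j := (Finset.sum_filter _ _).symm
  rw [hsum]
  have hpmf : ∀ j, 0 ≤ binomPMF n R j := fun j => by
    unfold binomPMF
    exact mul_nonneg (mul_nonneg (by positivity) (pow_nonneg hR0 _))
      (pow_nonneg (by linarith) _)
  by_cases hSe : S.Nonempty
  · set k := S.max' hSe with hk
    have hkmem := S.max'_mem hSe
    have hkn : k ≤ n := by
      have := (Finset.mem_filter.mp hkmem).1
      exact Nat.lt_succ_iff.mp (Finset.mem_range.mp this)
    have h1 : ∑ j ∈ S, binomPMF n R j ≤ binomCDF n R k := by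
      unfold binomCDF
      rw [min_eq_left hkn]
      apply Finset.sum_le_sum_of_subset_of_nonneg
      · intro j hj
        exact Finset.mem_range.mpr (Nat.lt_succ_of_le (S.le_max' j hj))
      · intro j _ _; exact hpmf j
    have h2 : binomCDF n R k < δ := by
      by_contra hcon
      push_neg at hcon
      have hRin : R ∈ {p : ℝ | p ∈ Set.Icc (0:ℝ) 1 ∧ δ ≤ binomCDF n p k} :=
        ⟨⟨hR0, hR1⟩, hcon⟩
      have hbdd : BddAbove {p : ℝ | p ∈ Set.Icc (0:ℝ) 1 ∧ δ ≤ binomCDF n p k} :=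
        ⟨1, fun x hx => hx.1.2⟩
      have hle := le_csSup hbdd hRin
      have hcp : cpUpper n δ k ≤ α := (Finset.mem_filter.mp hkmem).2
      unfold cpUpper at hcp
      linarith
    linarith
  · rw [Finset.not_nonempty_iff_eq_empty.mp hSe, Finset.sum_empty]
    linarith [hδ.1]
end

section
/- Let n ≥ 1 be a natural number, p ∈ [0,1], δ ∈ (0,1), and let X be a random variable with the binomial distribution Bin(n,p). For each x with 0 ≤ x < n, let q(x) be the unique solution in (0,1) of the equation (n−x)·C(n,x)·∫_{q(x)}^{1} t^x (1−t)^{n−1−x} dt = δ, and set q(n) = 1. Then Pr(p ≤ q(X)) ≥ 1 − δ; that is, the (1−δ)-quantile of the Beta(X+1, n−X) distribution is a valid (1−δ)-level upper confidence bound for the binomial success probability p. -/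
open scoped Classical BigOperators

lemma cp_int_deriv (a b : ℕ) (r : ℝ) :
    ∫ t in r..1, (((a:ℝ)+1) * t^a * (1-t)^(b+1) - ((b:ℝ)+1) * t^(a+1) * (1-t)^b)
      = - (r^(a+1) * (1-r)^(b+1)) := by
  have h : ∀ t ∈ Set.uIcc r 1, HasDerivAt (fun t : ℝ => t^(a+1) * (1-t)^(b+1))
      (((a:ℝ)+1) * t^a * (1-t)^(b+1) - ((b:ℝ)+1) * t^(a+1) * (1-t)^b) t := by
    intro t _
    have h1 : HasDerivAt (fun t : ℝ => t^(a+1)) (((a:ℝ)+1) * t^a) t := by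
      simpa using hasDerivAt_pow (a+1) t
    have hs : HasDerivAt (fun t : ℝ => 1 - t) (-1) t := by
      simpa using (hasDerivAt_id t).const_sub 1
    have h2 : HasDerivAt (fun t : ℝ => (1-t)^(b+1)) (-(((b:ℝ)+1) * (1-t)^b)) t := by
      have := (hasDerivAt_pow (b+1) (1-t)).comp t hs
      simpa [mul_comm, Function.comp_def] using this
    have := h1.mul h2
    refine this.congr_deriv ?_
    push_cast
    ring
  rw [intervalIntegral.integral_eq_sub_of_hasDerivAt h
    ((Continuous.intervalIntegrable (by continuity) r 1))]
  simp

lemma cp_int_base (b : ℕ) (r : ℝ) :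
    ∫ t in r..1, ((b:ℝ)+1)*(1-t)^b = (1-r)^(b+1) := by
  have h : ∀ t ∈ Set.uIcc r 1, HasDerivAt (fun t : ℝ => -(1-t)^(b+1))
      (((b:ℝ)+1)*(1-t)^b) t := by
    intro t _
    have hs : HasDerivAt (fun t : ℝ => 1 - t) (-1) t := by
      simpa using (hasDerivAt_id t).const_sub 1
    have h2 := ((hasDerivAt_pow (b+1) (1-t)).comp t hs).neg
    refine h2.congr_deriv ?_
    push_cast
    ring
  rw [intervalIntegral.integral_eq_sub_of_hasDerivAt h
    ((Continuous.intervalIntegrable (by continuity) r 1))]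
  simp

lemma cp_cdf_int (n : ℕ) : ∀ x, x < n → ∀ r : ℝ,
    ((n:ℝ) - x) * (n.choose x : ℝ) * (∫ t in r..1, t ^ x * (1 - t) ^ (n - 1 - x))
      = ∑ j ∈ Finset.range (x+1), binomPMF n r j := by
  intro x
  induction x with
  | zero =>
    intro hx r
    obtain ⟨b, rfl⟩ : ∃ b, n = b + 1 := ⟨n - 1, by omega⟩
    have : (∫ t in r..1, t ^ 0 * (1 - t) ^ (b + 1 - 1 - 0)) =
        (1/((b:ℝ)+1)) * ∫ t in r..1, ((b:ℝ)+1)*(1-t)^b := by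
      rw [intervalIntegral.integral_const_mul]
      have hb : ((b:ℝ)+1) ≠ 0 := by positivity
      field_simp
      simp
    rw [this, cp_int_base]
    simp [binomPMF]
    have hb : ((b:ℝ)+1) ≠ 0 := by positivity
    field_simp
  | succ x ih =>
    intro hx r
    obtain ⟨m, rfl⟩ : ∃ m, n = x + m + 2 := ⟨n - x - 2, by omega⟩
    have ihr := ih (by omega) r
    have hd := cp_int_deriv x m r
    have e1 : x + m + 2 - 1 - x = m + 1 := by omega
    have e2 : x + m + 2 - 1 - (x + 1) = m := by omega
    have e3 : x + m + 2 - (x + 1) = m + 1 := by omega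
    rw [e1] at ihr
    rw [e2]
    -- integrability
    have i1 : IntervalIntegrable (fun t : ℝ => ((x:ℝ)+1) * t^x * (1-t)^(m+1)) MeasureTheory.volume r 1 :=
      Continuous.intervalIntegrable (by continuity) r 1
    have i2 : IntervalIntegrable (fun t : ℝ => ((m:ℝ)+1) * t^(x+1) * (1-t)^m) MeasureTheory.volume r 1 :=
      Continuous.intervalIntegrable (by continuity) r 1
    rw [intervalIntegral.integral_sub i1 i2] at hd
    have c1 : (∫ t in r..1, ((x:ℝ)+1) * t^x * (1-t)^(m+1))
        = ((x:ℝ)+1) * ∫ t in r..1, t^x * (1-t)^(m+1) := by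
      rw [← intervalIntegral.integral_const_mul]; congr 1; ext t; ring
    have c2 : (∫ t in r..1, ((m:ℝ)+1) * t^(x+1) * (1-t)^m)
        = ((m:ℝ)+1) * ∫ t in r..1, t^(x+1) * (1-t)^m := by
      rw [← intervalIntegral.integral_const_mul]; congr 1; ext t; ring
    rw [c1, c2] at hd
    have hc : ((x+m+2).choose (x+1) : ℝ) * ((x:ℝ)+1)
        = ((x+m+2).choose x : ℝ) * ((m:ℝ)+2) := by
      have := Nat.choose_succ_right_eq (x+m+2) x
      have e4 : x + m + 2 - x = m + 2 := by omega
      rw [e4] at this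
      exact_mod_cast congrArg (Nat.cast : ℕ → ℝ) this
    rw [Finset.sum_range_succ, ← ihr]
    have hpmf : binomPMF (x+m+2) r (x+1)
        = ((x+m+2).choose (x+1) : ℝ) * r^(x+1) * (1-r)^(m+1) := by
      rw [binomPMF, e3]
    rw [hpmf]
    push_cast
    set A := ∫ t in r..1, t^x * (1-t)^(m+1)
    set B := ∫ t in r..1, t^(x+1) * (1-t)^m
    linear_combination (-(((x+m+2).choose (x+1):ℝ))) * hd + A * hc

lemma cp_pmf_nonneg {n j : ℕ} {p : ℝ} (h0 : 0 ≤ p) (h1 : p ≤ 1) :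
    0 ≤ binomPMF n p j := by
  have : (0:ℝ) ≤ 1 - p := by linarith
  unfold binomPMF
  positivity

lemma cp_split (n x : ℕ) (hx : x < n) {r s : ℝ} (hrs : r ≤ s) :
    (∑ j ∈ Finset.range (x+1), binomPMF n r j) - ∑ j ∈ Finset.range (x+1), binomPMF n s j
      = ((n:ℝ) - x) * (n.choose x : ℝ) * ∫ t in r..s, t ^ x * (1 - t) ^ (n - 1 - x) := by
  rw [← cp_cdf_int n x hx r, ← cp_cdf_int n x hx s, ← mul_sub]
  congr 1
  rw [← intervalIntegral.integral_add_adjacent_intervals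
    (Continuous.intervalIntegrable (by continuity) r s)
    (Continuous.intervalIntegrable (by continuity) s 1)]
  ring

lemma cp_coef_nonneg (n x : ℕ) (hx : x < n) : (0:ℝ) ≤ ((n:ℝ) - x) * (n.choose x : ℝ) := by
  have : (x:ℝ) ≤ n := by exact_mod_cast hx.le
  have h2 : (0:ℝ) ≤ (n.choose x : ℝ) := by positivity
  nlinarith

lemma cp_sum_mono (n x : ℕ) (hx : x < n) {r s : ℝ} (h0 : 0 ≤ r) (hrs : r ≤ s) (hs : s ≤ 1) :
    ∑ j ∈ Finset.range (x+1), binomPMF n s j ≤ ∑ j ∈ Finset.range (x+1), binomPMF n r j := by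
  have h := cp_split n x hx hrs
  have hint : 0 ≤ ∫ t in r..s, t ^ x * (1 - t) ^ (n - 1 - x) := by
    apply intervalIntegral.integral_nonneg hrs
    intro t ht
    have h1 : 0 ≤ t := le_trans h0 ht.1
    have h2 : t ≤ 1 := le_trans ht.2 hs
    have : (0:ℝ) ≤ 1 - t := by linarith
    positivity
  nlinarith [cp_coef_nonneg n x hx]

lemma cp_sum_strict (n x : ℕ) (hx : x < n) {r s : ℝ} (h0 : 0 < r) (hrs : r < s) (hs : s < 1) :
    ∑ j ∈ Finset.range (x+1), binomPMF n s j < ∑ j ∈ Finset.range (x+1), binomPMF n r j := by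
  have h := cp_split n x hx hrs.le
  have hint : 0 < ∫ t in r..s, t ^ x * (1 - t) ^ (n - 1 - x) := by
    apply intervalIntegral.intervalIntegral_pos_of_pos_on
      (Continuous.intervalIntegrable (by continuity) r s)
    · intro t ht
      have h1 : 0 < t := lt_trans h0 ht.1
      have h2 : t < 1 := lt_trans ht.2 hs
      have : (0:ℝ) < 1 - t := by linarith
      positivity
    · exact hrs
  have hcoef : (0:ℝ) < ((n:ℝ) - x) * (n.choose x : ℝ) := by
    have h1 : (x:ℝ) < n := by exact_mod_cast hx
    have h2 : (0:ℝ) < (n.choose x : ℝ) := by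
      exact_mod_cast Nat.choose_pos hx.le
    nlinarith
  nlinarith

lemma cp_total (n : ℕ) {p : ℝ} : ∑ j ∈ Finset.range (n+1), binomPMF n p j = 1 := by
  have h := add_pow p (1-p) n
  have h2 : p + (1 - p) = (1:ℝ) := by ring
  rw [h2, one_pow] at h
  calc ∑ j ∈ Finset.range (n+1), binomPMF n p j
      = ∑ j ∈ Finset.range (n+1), p ^ j * (1-p) ^ (n - j) * (n.choose j : ℝ) := by
        apply Finset.sum_congr rfl; intro j _; rw [binomPMF]; ring
    _ = 1 := h.symm


/-- The (1-δ)-quantile of the Beta(X+1, n-X) distribution, characterized as the unique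
solution q(x) ∈ (0,1) of (n-x)·C(n,x)·∫_{q(x)}^1 t^x (1-t)^{n-1-x} dt = δ for x < n
(with q(n) = 1), is a valid (1-δ)-level upper confidence bound: Pr(p ≤ q(X)) ≥ 1 - δ. -/
theorem betaQuantile_upper_coverage
    (n : ℕ) (hn : 1 ≤ n) (p : ℝ) (hp : p ∈ Set.Icc (0 : ℝ) 1)
    (δ : ℝ) (hδ : δ ∈ Set.Ioo (0 : ℝ) 1) (q : ℕ → ℝ)
    (hq : ∀ x, x < n → q x ∈ Set.Ioo (0 : ℝ) 1 ∧
      ((n : ℝ) - x) * (n.choose x : ℝ) *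
        (∫ t in (q x)..1, t ^ x * (1 - t) ^ (n - 1 - x)) = δ)
    (hqn : q n = 1) :
    1 - δ ≤ ∑ j ∈ Finset.range (n + 1),
      (if p ≤ q j then binomPMF n p j else 0) := by
  obtain ⟨hp0, hp1⟩ := hp
  -- F(x, q x) = δ for x < n
  have hFq : ∀ x, x < n → ∑ j ∈ Finset.range (x+1), binomPMF n (q x) j = δ := by
    intro x hx
    rw [← cp_cdf_int n x hx (q x)]
    exact (hq x hx).2
  -- q is monotone step
  have hstep : ∀ x, x + 1 ≤ n → q x ≤ q (x+1) := by
    intro x hx1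
    rcases eq_or_lt_of_le hx1 with heq | hlt
    · rw [heq, hqn]
      exact ((hq x (by omega)).1.2).le
    · by_contra hcon
      push_neg at hcon
      have hx : x < n := by omega
      have hx1' : x + 1 < n := hlt
      obtain ⟨⟨hq0, hq1⟩, _⟩ := hq x hx
      obtain ⟨⟨hq0', hq1'⟩, _⟩ := hq (x+1) hx1'
      -- δ = F(x+1, q(x+1)) ≥ F(x, q(x+1)) > F(x, q x) = δ
      have h1 : ∑ j ∈ Finset.range (x+1), binomPMF n (q (x+1)) j
          ≤ ∑ j ∈ Finset.range (x+2), binomPMF n (q (x+1)) j := by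
        exact Finset.sum_le_sum_of_subset_of_nonneg
          (Finset.range_subset_range.2 (by omega))
          (fun j _ _ => cp_pmf_nonneg hq0'.le hq1'.le)
      have h2 : ∑ j ∈ Finset.range (x+1), binomPMF n (q x) j
          < ∑ j ∈ Finset.range (x+1), binomPMF n (q (x+1)) j :=
        cp_sum_strict n x hx hq0' hcon hq1
      rw [hFq x hx] at h2
      rw [hFq (x+1) hx1'] at h1
      linarith
  have hmono : ∀ i j, i ≤ j → j ≤ n → q i ≤ q j := by
    intro i j hij hjn
    induction j with
    | zero => simp_all
    | succ j ih =>
      rcases Nat.lt_or_ge i (j+1) with h | h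
      · exact le_trans (ih (by omega) (by omega)) (hstep j hjn)
      · have : i = j + 1 := by omega
        rw [this]
  -- the smallest index with p ≤ q
  have hex : ∃ k, p ≤ q k ∧ k ≤ n := ⟨n, by rw [hqn]; exact ⟨hp1, le_rfl⟩⟩
  have hexk : ∃ k, p ≤ q k := ⟨n, by rw [hqn]; exact hp1⟩
  set k := Nat.find hexk with hk
  have hkle : k ≤ n := Nat.find_le (by rw [hqn]; exact hp1)
  have hkq : p ≤ q k := Nat.find_spec hexk
  have hup : ∀ j, k ≤ j → j ≤ n → p ≤ q j := fun j hkj hjn =>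
    le_trans hkq (hmono k j hkj hjn)
  -- lower bound the sum by the tail sum
  have hsum1 : ∑ j ∈ Finset.range (n+1), (if k ≤ j then binomPMF n p j else 0)
      ≤ ∑ j ∈ Finset.range (n+1), (if p ≤ q j then binomPMF n p j else 0) := by
    apply Finset.sum_le_sum
    intro j hj
    rw [Finset.mem_range] at hj
    by_cases h : k ≤ j
    · rw [if_pos h, if_pos (hup j h (by omega))]
    · rw [if_neg h]
      split
      · exact cp_pmf_nonneg hp0 hp1
      · exact le_rfl
  have hsplit : ∑ j ∈ Finset.range (n+1), (if k ≤ j then binomPMF n p j else 0)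
      = 1 - ∑ j ∈ Finset.range k, binomPMF n p j := by
    have h1 : ∑ j ∈ Finset.range (n+1), (if k ≤ j then binomPMF n p j else 0)
        = ∑ j ∈ Finset.range (n+1), binomPMF n p j
          - ∑ j ∈ Finset.range (n+1), (if j < k then binomPMF n p j else 0) := by
      rw [eq_sub_iff_add_eq, ← Finset.sum_add_distrib]
      apply Finset.sum_congr rfl
      intro j _
      by_cases h : k ≤ j
      · rw [if_pos h, if_neg (by omega)]; ring
      · rw [if_neg h, if_pos (by omega)]; ring
    rw [h1, cp_total n]
    congr 1
    rw [Finset.sum_ite, Finset.sum_const_zero, add_zero]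
    congr 1
    ext j
    simp only [Finset.mem_filter, Finset.mem_range]
    omega
  -- bound the head sum by δ
  have hhead : ∑ j ∈ Finset.range k, binomPMF n p j ≤ δ := by
    match hk2 : k with
    | 0 => simp; exact hδ.1.le
    | k' + 1 =>
      have hk'n : k' < n := by omega
      have hnle : ¬ p ≤ q k' := Nat.find_min hexk (by omega)
      push_neg at hnle
      obtain ⟨⟨hq0, hq1⟩, _⟩ := hq k' hk'n
      have := cp_sum_mono n k' hk'n hq0.le hnle.le hp1
      rw [hFq k' hk'n] at this
      exact this
  linarith
end
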